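/- Let X and Y be Banach spaces and let H ⊆ L(X*, Y) be a closed subspace containing all operators x ⊗ y (x ∈ X, y ∈ Y), such that every T ∈ H is weak*-to-weakly continuous. If X is octahedral and there exists y ∈ S_Y with n(Y, y) = 1, then H is octahedral. -/

import Mathlib

open Filter Topology

noncomputable section

/-- A Banach space is octahedral (OH). -/
def IsOctahedral (Z : Type*) [NormedAddCommGroup Z] : Prop :=
  ∀ (n : ℕ) (z : Fin n → Z), (∀ i, ‖z i‖ = 1) → ∀ ε : ℝ, 0 < ε →
    ∃ w : Z, ‖w‖ = 1 ∧ ∀ i, ‖z i + w‖ > 2 - ε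

/-- Locally octahedral (LOH). -/
def IsLocallyOctahedral (Z : Type*) [NormedAddCommGroup Z] : Prop :=
  ∀ z : Z, ‖z‖ = 1 → ∀ ε : ℝ, 0 < ε →
    ∃ w : Z, ‖w‖ = 1 ∧ ‖z + w‖ > 2 - ε ∧ ‖z - w‖ > 2 - ε

/-- Weakly octahedral (WOH). -/
def IsWeaklyOctahedral (X : Type*) [NormedAddCommGroup X] [NormedSpace ℝ X] : Prop :=
  ∀ (n : ℕ) (z : Fin n → X), (∀ i, ‖z i‖ = 1) → ∀ f : X →L[ℝ] ℝ, ‖f‖ ≤ 1 →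
    ∀ ε : ℝ, 0 < ε → ∃ y : X, ‖y‖ = 1 ∧ ∀ i, ∀ t : ℝ, 0 < t →
      ‖z i + t • y‖ ≥ (1 - ε) * (|f (z i)| + t) ∧
      ‖z i - t • y‖ ≥ (1 - ε) * (|f (z i)| + t)

/-- Almost square (ASQ), sequential formulation. -/
def IsASQ (Z : Type*) [NormedAddCommGroup Z] : Prop :=
  ∀ (n : ℕ) (z : Fin n → Z), (∀ i, ‖z i‖ = 1) →
    ∃ w : ℕ → Z, (∀ k, ‖w k‖ ≤ 1) ∧
      Tendsto (fun k => ‖w k‖) atTop (nhds 1) ∧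
      ∀ i, Tendsto (fun k => ‖z i + w k‖) atTop (nhds 1) ∧
           Tendsto (fun k => ‖z i - w k‖) atTop (nhds 1)

/-- Almost square (ASQ), finite-ε formulation. -/
def IsASQeps (Z : Type*) [NormedAddCommGroup Z] : Prop :=
  ∀ (n : ℕ) (z : Fin n → Z), (∀ i, ‖z i‖ = 1) → ∀ ε : ℝ, 0 < ε →
    ∃ w : Z, ‖w‖ = 1 ∧ ∀ i, ‖z i + w‖ ≤ 1 + ε ∧ ‖z i - w‖ ≤ 1 + ε

/-- Locally almost square (LASQ), sequential formulation. -/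
def IsLASQ (Z : Type*) [NormedAddCommGroup Z] : Prop :=
  ∀ z : Z, ‖z‖ = 1 →
    ∃ w : ℕ → Z, (∀ k, ‖w k‖ ≤ 1) ∧
      Tendsto (fun k => ‖w k‖) atTop (nhds 1) ∧
      Tendsto (fun k => ‖z + w k‖) atTop (nhds 1) ∧
      Tendsto (fun k => ‖z - w k‖) atTop (nhds 1)

/-- Locally almost square (LASQ), ε formulation. -/
def IsLASQeps (Z : Type*) [NormedAddCommGroup Z] : Prop :=
  ∀ z : Z, ‖z‖ = 1 → ∀ ε : ℝ, 0 < ε →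
    ∃ w : Z, ‖w‖ = 1 ∧ ‖z + w‖ ≤ 1 + ε ∧ ‖z - w‖ ≤ 1 + ε

/-- Weakly almost square (WASQ). -/
def IsWASQ (Z : Type*) [NormedAddCommGroup Z] [NormedSpace ℝ Z] : Prop :=
  ∀ z : Z, ‖z‖ = 1 →
    ∃ w : ℕ → Z, (∀ k, ‖w k‖ ≤ 1) ∧
      Tendsto (fun k => ‖w k‖) atTop (nhds 1) ∧
      Tendsto (fun k => ‖z + w k‖) atTop (nhds 1) ∧
      Tendsto (fun k => ‖z - w k‖) atTop (nhds 1) ∧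
      ∀ f : Z →L[ℝ] ℝ, Tendsto (fun k => f (w k)) atTop (nhds 0)

/-- Local diameter two property: every slice of the unit ball has diameter two. -/
def HasLD2P (Z : Type*) [NormedAddCommGroup Z] [NormedSpace ℝ Z] : Prop :=
  ∀ f : Z →L[ℝ] ℝ, ‖f‖ = 1 → ∀ α : ℝ, 0 < α →
    Metric.diam {x : Z | ‖x‖ ≤ 1 ∧ 1 - α < f x} = 2

/-- Diameter two property: every nonempty relatively weakly open subset of the unit
ball has diameter two. -/
def HasD2P (Z : Type*) [NormedAddCommGroup Z] [NormedSpace ℝ Z] : Prop :=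
  ∀ U : Set Z, U.Nonempty → (∀ x ∈ U, ‖x‖ ≤ 1) →
    (∀ x ∈ U, ∃ (n : ℕ) (f : Fin n → Z →L[ℝ] ℝ) (δ : ℝ), 0 < δ ∧
      {y : Z | ‖y‖ ≤ 1 ∧ ∀ i, |f i y - f i x| < δ} ⊆ U) →
    Metric.diam U = 2

/-- The Schur property. -/
def HasSchurProperty (Z : Type*) [SeminormedAddCommGroup Z] [NormedSpace ℝ Z] : Prop :=
  ∀ (u : ℕ → Z) (x : Z),
    (∀ f : Z →L[ℝ] ℝ, Tendsto (fun k => f (u k)) atTop (nhds (f x))) →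
    Tendsto (fun k => ‖u k - x‖) atTop (nhds 0)

/-- The Dunford–Pettis property: every weakly compact operator is
weak-to-norm sequentially continuous. -/
def HasDPP (X : Type*) [NormedAddCommGroup X] [NormedSpace ℝ X] : Prop :=
  ∀ (Y : Type) (_ : NormedAddCommGroup Y) (_ : NormedSpace ℝ Y) (_ : CompleteSpace Y)
    (T : X →L[ℝ] Y),
    (∃ K : Set (WeakSpace ℝ Y), IsCompact K ∧
      ∀ x : X, ‖x‖ ≤ 1 → toWeakSpace ℝ Y (T x) ∈ K) →
    ∀ (u : ℕ → X) (x : X),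
      (∀ f : X →L[ℝ] ℝ, Tendsto (fun k => f (u k)) atTop (nhds (f x))) →
      Tendsto (fun k => ‖T (u k) - T x‖) atTop (nhds 0)

/-- `Z`, together with the bilinear-type map `t`, is (a realization of) the injective
tensor product `X ⊗̂_ε Y`: the span of elementary tensors is dense and the norm of any
linear combination of elementary tensors is given by the injective tensor norm. -/
def IsInjTensorProduct (X Y Z : Type*) [NormedAddCommGroup X] [NormedSpace ℝ X]
    [NormedAddCommGroup Y] [NormedSpace ℝ Y] [NormedAddCommGroup Z] [NormedSpace ℝ Z]
    (t : X → Y → Z) : Prop :=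
  (Submodule.span ℝ (Set.range fun p : X × Y => t p.1 p.2)).topologicalClosure = ⊤ ∧
  ∀ l : List (X × Y),
    ‖(l.map fun p => t p.1 p.2).sum‖ =
      sSup {s : ℝ | ∃ (f : X →L[ℝ] ℝ) (g : Y →L[ℝ] ℝ), ‖f‖ ≤ 1 ∧ ‖g‖ ≤ 1 ∧
        s = |(l.map fun p => f p.1 * g p.2).sum|}

/-- `Z`, together with the map `t`, is (a realization of) the projective tensor product
`X ⊗̂_π Y`: the span of elementary tensors is dense and the norm of any combination of
elementary tensors is the infimum of `Σ ‖xᵢ‖‖yᵢ‖` over all representations (two formal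
combinations represent the same tensor iff they agree against all pairs of functionals). -/
def IsProjTensorProduct (X Y Z : Type*) [NormedAddCommGroup X] [NormedSpace ℝ X]
    [NormedAddCommGroup Y] [NormedSpace ℝ Y] [NormedAddCommGroup Z] [NormedSpace ℝ Z]
    (t : X → Y → Z) : Prop :=
  (Submodule.span ℝ (Set.range fun p : X × Y => t p.1 p.2)).topologicalClosure = ⊤ ∧
  ∀ l : List (X × Y),
    ‖(l.map fun p => t p.1 p.2).sum‖ =
      sInf {s : ℝ | ∃ l' : List (X × Y),
        (∀ (f : X →L[ℝ] ℝ) (g : Y →L[ℝ] ℝ),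
          (l'.map fun p => f p.1 * g p.2).sum = (l.map fun p => f p.1 * g p.2).sum) ∧
        s = (l'.map fun p => ‖p.1‖ * ‖p.2‖).sum}

/-- `Z`, together with the diagonal map `δ : x ↦ x^N`, is (a realization of) the `N`-fold
injective symmetric tensor product `⊗̂_{ε,s,N} X`. -/
def IsInjSymTensorProduct (X : Type*) [NormedAddCommGroup X] [NormedSpace ℝ X] (N : ℕ)
    (Z : Type*) [NormedAddCommGroup Z] [NormedSpace ℝ Z] (δ : X → Z) : Prop :=
  (Submodule.span ℝ (Set.range δ)).topologicalClosure = ⊤ ∧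
  ∀ l : List (ℝ × X),
    ‖(l.map fun p => p.1 • δ p.2).sum‖ =
      sSup {s : ℝ | ∃ f : X →L[ℝ] ℝ, ‖f‖ ≤ 1 ∧
        s = |(l.map fun p => p.1 * (f p.2) ^ N).sum|}

/-- `Z`, together with the diagonal map `δ : x ↦ x^N`, is (a realization of) the `N`-fold
projective symmetric tensor product `⊗̂_{π,s,N} X`. -/
def IsProjSymTensorProduct (X : Type*) [NormedAddCommGroup X] [NormedSpace ℝ X] (N : ℕ)
    (Z : Type*) [NormedAddCommGroup Z] [NormedSpace ℝ Z] (δ : X → Z) : Prop :=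
  (Submodule.span ℝ (Set.range δ)).topologicalClosure = ⊤ ∧
  ∀ l : List (ℝ × X),
    ‖(l.map fun p => p.1 • δ p.2).sum‖ =
      sInf {s : ℝ | ∃ l' : List (ℝ × X),
        (∀ f : X →L[ℝ] ℝ,
          (l'.map fun p => p.1 * (f p.2) ^ N).sum = (l.map fun p => p.1 * (f p.2) ^ N).sum) ∧
        s = (l'.map fun p => |p.1| * ‖p.2‖ ^ N).sum}

/-- An operator `T : X* → Y` is weak*-to-weakly continuous. -/
def WeakStarToWeakContinuous {X Y : Type*} [NormedAddCommGroup X] [NormedSpace ℝ X]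
    [NormedAddCommGroup Y] [NormedSpace ℝ Y] (T : (X →L[ℝ] ℝ) →L[ℝ] Y) : Prop :=
  ∀ g : Y →L[ℝ] ℝ, Continuous fun f : WeakDual ℝ X => g (T f)

/-- The elementary tensor `x ⊗ y` regarded as the operator `x* ↦ x*(x) • y` in `L(X*, Y)`. -/
def elemTensor {X Y : Type*} [NormedAddCommGroup X] [NormedSpace ℝ X]
    [NormedAddCommGroup Y] [NormedSpace ℝ Y] (x : X) (y : Y) : (X →L[ℝ] ℝ) →L[ℝ] Y :=
  (ContinuousLinearMap.apply ℝ ℝ x).smulRight y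

/-- `n(Z, u) = 1`, i.e. `D(Z,u) = {f ∈ B_{Z*} : f(u) = 1}` is a norming set for `Z`. -/
def NormOneUnitary (Z : Type*) [NormedAddCommGroup Z] [NormedSpace ℝ Z] (u : Z) : Prop :=
  ‖u‖ = 1 ∧ ∀ z : Z, ‖z‖ ≤ sSup {r : ℝ | ∃ g : Z →L[ℝ] ℝ, ‖g‖ ≤ 1 ∧ g u = 1 ∧ r = |g z|}

/-- Asplund space: every closed separable subspace has separable dual. -/
def IsAsplund (Y : Type*) [NormedAddCommGroup Y] [NormedSpace ℝ Y] : Prop :=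
  ∀ S : Submodule ℝ Y, IsClosed (S : Set Y) → TopologicalSpace.SeparableSpace S →
    TopologicalSpace.SeparableSpace ((↥S) →L[ℝ] ℝ)

/-- The (metric) approximation-type property: finite-rank operators approximate the
identity uniformly on compact sets. -/
def HasAP (E : Type*) [NormedAddCommGroup E] [NormedSpace ℝ E] : Prop :=
  ∀ K : Set E, IsCompact K → ∀ ε : ℝ, 0 < ε →
    ∃ T : E →L[ℝ] E, FiniteDimensional ℝ (LinearMap.range (T : E →ₗ[ℝ] E)) ∧
      ∀ x ∈ K, ‖T x - x‖ ≤ ε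

end

/-- Auxiliary: a weak*-continuous linear functional on `X*` is evaluation at a point of `X`. -/
lemma weakStarContinuous_eval {X : Type*} [NormedAddCommGroup X] [NormedSpace ℝ X]
    (ψ : (X →L[ℝ] ℝ) →ₗ[ℝ] ℝ) (hψ : Continuous fun f : WeakDual ℝ X => ψ f) :
    ∃ x : X, ∀ f : X →L[ℝ] ℝ, ψ f = f x := by
  have h0 : (fun f : WeakDual ℝ X => ψ f) ⁻¹' Set.Ioo (-1 : ℝ) 1 ∈ 𝓝 (0 : WeakDual ℝ X) := by
    have : Set.Ioo (-1 : ℝ) 1 ∈ 𝓝 ((fun f : WeakDual ℝ X => ψ f) 0) := by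
      simp only [show ψ (0 : WeakDual ℝ X) = 0 from ψ.map_zero]
      exact Ioo_mem_nhds (by norm_num) (by norm_num)
    exact hψ.continuousAt.preimage_mem_nhds this
  have hemb : Topology.IsEmbedding (fun (f : WeakDual ℝ X) (x : X) => f x) :=
    WeakBilin.isEmbedding (B := topDualPairing ℝ X) ContinuousLinearMap.coe_injective
  rw [hemb.nhds_eq_comap, Filter.mem_comap] at h0
  obtain ⟨s, hs, hsub⟩ := h0
  rw [show (fun x : X => (0 : WeakDual ℝ X) x) = (0 : X → ℝ) from rfl, nhds_pi,
    Filter.mem_pi] at hs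
  obtain ⟨I, hIfin, t, ht, hIt⟩ := hs
  have := hIfin.fintype
  have hker : ⨅ i : I, LinearMap.ker
      ((ContinuousLinearMap.apply ℝ ℝ (i : X)).toLinearMap) ≤ LinearMap.ker ψ := by
    intro f hf
    simp only [Submodule.mem_iInf, LinearMap.mem_ker] at hf ⊢
    have hzero : ∀ x ∈ I, f x = 0 := fun x hx => hf ⟨x, hx⟩
    have key : ∀ c : ℝ, c * ψ f ∈ Set.Ioo (-1 : ℝ) 1 := by
      intro c
      have : (fun (g : WeakDual ℝ X) (x : X) => g x) (c • f) ∈ Set.pi I t := by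
        intro x hx
        show (c • f) x ∈ t x
        have hz : (c • f) x = 0 := by simp [hzero x hx]
        rw [hz]
        simpa using mem_of_mem_nhds (ht x)
      have := hsub (hIt this)
      rw [← smul_eq_mul, ← ψ.map_smul c f]; exact this
    by_contra hne
    have h2 := key (2 / ψ f)
    rw [div_mul_cancel₀ 2 hne] at h2
    exact absurd h2.2 (by norm_num)
  have hspan := mem_span_of_iInf_ker_le_ker (𝕜 := ℝ) hker
  obtain ⟨c, hc⟩ := (Submodule.mem_span_range_iff_exists_fun ℝ).1 hspan
  refine ⟨∑ i : I, c i • (i : X), fun f => ?_⟩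
  have := LinearMap.congr_fun hc f
  simp only [LinearMap.coe_sum, Finset.sum_apply, LinearMap.smul_apply,
    ContinuousLinearMap.coe_coe, ContinuousLinearMap.apply_apply, smul_eq_mul] at this
  rw [← this, map_sum]
  simp [smul_eq_mul]

set_option maxHeartbeats 1000000 in
theorem statement2 (X Y : Type*) [NormedAddCommGroup X] [NormedSpace ℝ X] [CompleteSpace X]
    [NormedAddCommGroup Y] [NormedSpace ℝ Y] [CompleteSpace Y]
    (H : Submodule ℝ ((X →L[ℝ] ℝ) →L[ℝ] Y))
    (hHclosed : IsClosed (H : Set ((X →L[ℝ] ℝ) →L[ℝ] Y)))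
    (htens : ∀ (x : X) (y : Y), elemTensor x y ∈ H)
    (hwstar : ∀ T ∈ H, WeakStarToWeakContinuous T)
    (hX : IsOctahedral X) (y : Y) (hy : NormOneUnitary Y y) :
    @IsOctahedral ↥H (by exact @Submodule.normedAddCommGroup ℝ ((X →L[ℝ] ℝ) →L[ℝ] Y) _ _ _ H) := by
  intro n T hTn ε hε
  set δ : ℝ := min (ε / 3) (1 / 2) with hδdef
  have hδpos : 0 < δ := lt_min (by linarith) (by norm_num)
  have hδε : δ ≤ ε / 3 := min_le_left _ _
  have hδhalf : δ ≤ 1 / 2 := min_le_right _ _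
  have hy0 : y ≠ 0 := by
    intro h
    have h1 := hy.1
    rw [h, norm_zero] at h1
    exact one_ne_zero h1.symm
  -- Step A+B: for each i, find g, x
  have key : ∀ i : Fin n, ∃ (g : Y →L[ℝ] ℝ) (x : X), ‖g‖ ≤ 1 ∧ g y = 1 ∧
      (∀ f : X →L[ℝ] ℝ, g ((T i : (X →L[ℝ] ℝ) →L[ℝ] Y) f) = f x) ∧
      1 - δ / 2 < ‖x‖ ∧ ‖x‖ ≤ 1 := by
    intro i
    have hTin : ‖(T i : (X →L[ℝ] ℝ) →L[ℝ] Y)‖ = 1 := by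
      exact hTn i
    have hlt : 1 - δ / 2 < ‖(T i : (X →L[ℝ] ℝ) →L[ℝ] Y)‖ := by
      rw [hTin]; linarith
    obtain ⟨φ, hφ1, hφlt⟩ := ContinuousLinearMap.exists_lt_apply_of_lt_opNorm _ hlt
    -- norming functional
    set S : Set ℝ := {r : ℝ | ∃ g : Y →L[ℝ] ℝ, ‖g‖ ≤ 1 ∧ g y = 1 ∧
      r = |g ((T i : (X →L[ℝ] ℝ) →L[ℝ] Y) φ)|} with hS
    have hSne : S.Nonempty := by
      obtain ⟨g, hg1, hgy⟩ := exists_dual_vector ℝ y (norm_ne_zero_iff.2 hy0)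
      refine ⟨_, g, le_of_eq hg1, ?_, rfl⟩
      rw [hgy, hy.1]; norm_num
    have hlt2 : 1 - δ / 2 < sSup S :=
      lt_of_lt_of_le hφlt (hy.2 ((T i : (X →L[ℝ] ℝ) →L[ℝ] Y) φ))
    obtain ⟨r, hrS, hrlt⟩ := exists_lt_of_lt_csSup hSne hlt2
    obtain ⟨g, hg1, hgy, hr⟩ := hrS
    -- weak*-continuity gives the point x
    have hcont : Continuous fun f : WeakDual ℝ X =>
        (g.comp (T i : (X →L[ℝ] ℝ) →L[ℝ] Y)).toLinearMap f :=
      hwstar _ (T i).2 g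
    obtain ⟨x, hx⟩ := weakStarContinuous_eval _ hcont
    have hgT : ∀ f : X →L[ℝ] ℝ, g ((T i : (X →L[ℝ] ℝ) →L[ℝ] Y) f) = f x := fun f => hx f
    refine ⟨g, x, hg1, hgy, hgT, ?_, ?_⟩
    · have : 1 - δ / 2 < |φ x| := by rw [← hgT φ, ← hr]; exact hrlt
      calc 1 - δ / 2 < |φ x| := this
        _ ≤ ‖φ‖ * ‖x‖ := by
            simpa [Real.norm_eq_abs] using φ.le_opNorm x
        _ ≤ 1 * ‖x‖ := by
            apply mul_le_mul_of_nonneg_right hφ1.le (norm_nonneg x)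
        _ = ‖x‖ := one_mul _
    · refine NormedSpace.norm_le_dual_bound ℝ x zero_le_one fun f => ?_
      rw [← hgT f]
      calc ‖g ((T i : (X →L[ℝ] ℝ) →L[ℝ] Y) f)‖
          ≤ ‖g‖ * ‖(T i : (X →L[ℝ] ℝ) →L[ℝ] Y) f‖ := g.le_opNorm _
        _ ≤ 1 * (‖(T i : (X →L[ℝ] ℝ) →L[ℝ] Y)‖ * ‖f‖) :=
            mul_le_mul hg1 ((T i : (X →L[ℝ] ℝ) →L[ℝ] Y).le_opNorm f)
              (norm_nonneg _) zero_le_one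
        _ = 1 * ‖f‖ := by rw [hTin]; ring
  choose g x hg1 hgy hgT hxlow hxup using key
  -- Step C: octahedrality of X
  have hxne : ∀ i, ‖x i‖ ≠ 0 := fun i => by
    have := hxlow i; intro h; rw [h] at this; linarith
  set z : Fin n → X := fun i => ‖x i‖⁻¹ • x i with hz
  have hzn : ∀ i, ‖z i‖ = 1 := fun i => by
    rw [hz]; simp [norm_smul, abs_of_nonneg (inv_nonneg.2 (norm_nonneg (x i))),
      inv_mul_cancel₀ (hxne i)]
  obtain ⟨x₀, hx₀n, hx₀⟩ := hX n z hzn δ hδpos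
  -- Step E: the witness
  have hwn : ‖elemTensor x₀ y‖ = 1 := by
    rw [elemTensor, ContinuousLinearMap.norm_smulRight_apply, hy.1, mul_one]
    exact (NormedSpace.inclusionInDoubleDualLi (𝕜 := ℝ) (E := X)).norm_map x₀ ▸ hx₀n
  refine ⟨⟨elemTensor x₀ y, htens x₀ y⟩, hwn, fun i => ?_⟩
  -- Step D: the estimating functional
  have hvne : z i + x₀ ≠ 0 := by
    intro h
    have := hx₀ i
    rw [h, norm_zero] at this; linarith
  obtain ⟨F, hF1, hFv0⟩ := exists_dual_vector ℝ (z i + x₀) (norm_ne_zero_iff.2 hvne)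
  have hFv : F (z i + x₀) = ‖z i + x₀‖ := by exact_mod_cast hFv0
  have hFv' : F (z i) + F x₀ > 2 - δ := by
    have : F (z i + x₀) = F (z i) + F x₀ := map_add F _ _
    rw [← this, hFv]; exact hx₀ i
  have hFz : F (z i) ≤ 1 := by
    calc F (z i) ≤ |F (z i)| := le_abs_self _
      _ ≤ ‖F‖ * ‖z i‖ := by simpa [Real.norm_eq_abs] using F.le_opNorm (z i)
      _ = 1 := by rw [hF1, hzn i, mul_one]
  have hFx₀le : F x₀ ≤ 1 := by
    calc F x₀ ≤ |F x₀| := le_abs_self _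
      _ ≤ ‖F‖ * ‖x₀‖ := by simpa [Real.norm_eq_abs] using F.le_opNorm x₀
      _ = 1 := by rw [hF1, hx₀n, mul_one]
  have hFx₀ : F x₀ > 1 - δ := by linarith
  have hFzlow : F (z i) > 1 - δ := by linarith
  have hFxi : F (x i) > (1 - δ / 2) * (1 - δ) := by
    have hFzi : F (x i) = ‖x i‖ * F (z i) := by
      have : F (z i) = ‖x i‖⁻¹ * F (x i) := by rw [hz]; simp [map_smul, smul_eq_mul]
      rw [this, ← mul_assoc, mul_inv_cancel₀ (hxne i), one_mul]
    rw [hFzi]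
    have h1 : (0:ℝ) < 1 - δ := by linarith
    calc (1 - δ / 2) * (1 - δ) < ‖x i‖ * (1 - δ) :=
        mul_lt_mul_of_pos_right (hxlow i) h1
      _ ≤ ‖x i‖ * F (z i) := by
          apply mul_le_mul_of_nonneg_left (le_of_lt hFzlow) (norm_nonneg _)
  -- the final estimate
  have hval : g i (((T i : (X →L[ℝ] ℝ) →L[ℝ] Y) + elemTensor x₀ y) F)
      = F (x i) + F x₀ := by
    rw [ContinuousLinearMap.add_apply, map_add, hgT i F]
    congr 1
    show g i (F x₀ • y) = F x₀
    rw [map_smul, hgy i, smul_eq_mul, mul_one]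
  have hnorm : g i (((T i : (X →L[ℝ] ℝ) →L[ℝ] Y) + elemTensor x₀ y) F)
      ≤ ‖(T i : (X →L[ℝ] ℝ) →L[ℝ] Y) + elemTensor x₀ y‖ := by
    calc g i (((T i : (X →L[ℝ] ℝ) →L[ℝ] Y) + elemTensor x₀ y) F)
        ≤ ‖g i (((T i : (X →L[ℝ] ℝ) →L[ℝ] Y) + elemTensor x₀ y) F)‖ := by rw [Real.norm_eq_abs]; exact le_abs_self _
      _ ≤ ‖g i‖ * ‖((T i : (X →L[ℝ] ℝ) →L[ℝ] Y) + elemTensor x₀ y) F‖ := (g i).le_opNorm _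
      _ ≤ 1 * (‖(T i : (X →L[ℝ] ℝ) →L[ℝ] Y) + elemTensor x₀ y‖ * ‖F‖) :=
          mul_le_mul (hg1 i) (ContinuousLinearMap.le_opNorm _ F) (norm_nonneg _) zero_le_one
      _ = ‖(T i : (X →L[ℝ] ℝ) →L[ℝ] Y) + elemTensor x₀ y‖ := by rw [hF1]; ring
  have hfinal : (2:ℝ) - ε < (1 - δ / 2) * (1 - δ) + (1 - δ) := by nlinarith
  letI : NormedAddCommGroup ↥H := by exact @Submodule.normedAddCommGroup ℝ ((X →L[ℝ] ℝ) →L[ℝ] Y) _ _ _ H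
  have heq : ‖T i + (⟨elemTensor x₀ y, htens x₀ y⟩ : ↥H)‖
      = ‖(T i : (X →L[ℝ] ℝ) →L[ℝ] Y) + elemTensor x₀ y‖ := rfl
  rw [heq]
  calc (2:ℝ) - ε < (1 - δ / 2) * (1 - δ) + (1 - δ) := hfinal
    _ < F (x i) + F x₀ := by linarith
    _ = g i (((T i : (X →L[ℝ] ℝ) →L[ℝ] Y) + elemTensor x₀ y) F) := hval.symm
    _ ≤ _ := hnorm
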